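/- An S-weighted language L : Σ* → S is computed by some weighted finite automaton over the semiring S if and only if there exists a finite monoid M, a map h : Σ* → (M → S) that is a monoid morphism into the monoid S^M with convolution product (u·v)(m) = ∑_{m = m₁m₂} u(m₁)v(m₂) and unit δ_e, with each h(w) finitely supported, and a map p : M → S such that L(w) = ∑_{m∈M} h(w)(m)·p(m). -/

import Mathlib

set_option linter.unusedSectionVars false

/-- Brandt monoid over `Q`: identity, zero, and pairs with `(i,j)(j,l)=(i,l)`. -/
abbrev Br (Q : Type) : Type := Option (Option (Q × Q))

namespace Br
variable {Q : Type} [DecidableEq Q]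

instance : One (Br Q) := ⟨none⟩
def z : Br Q := some none
def pr (i j : Q) : Br Q := some (some (i, j))

protected def mul : Br Q → Br Q → Br Q
  | none, y => y
  | some x, none => some x
  | some none, some _ => some none
  | some (some _), some none => some none
  | some (some (i, j)), some (some (i', j')) =>
      if j = i' then some (some (i, j')) else some none

instance : Mul (Br Q) := ⟨Br.mul⟩

lemma one_def : (1 : Br Q) = none := rfl

@[simp] lemma one_mul' (x : Br Q) : 1 * x = x := rfl
@[simp] lemma mul_one' (x : Br Q) : x * 1 = x := by
  rcases x with _ | (_ | ⟨i, j⟩) <;> rfl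
@[simp] lemma z_mul (x : Br Q) : z * x = z := by
  rcases x with _ | (_ | ⟨i, j⟩) <;> rfl
@[simp] lemma mul_z (x : Br Q) : x * z = z := by
  rcases x with _ | (_ | ⟨i, j⟩) <;> rfl
@[simp] lemma pr_mul_pr (i j i' j' : Q) :
    pr i j * pr i' j' = if j = i' then pr i j' else z := rfl

@[simp] lemma z_ne_one : (z : Br Q) ≠ 1 := by simp [z, one_def]
@[simp] lemma pr_ne_one (i j : Q) : pr i j ≠ 1 := by simp [pr, one_def]
@[simp] lemma pr_ne_z (i j : Q) : pr i j ≠ z := by simp [pr, z]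
@[simp] lemma pr_inj (i j i' j' : Q) : pr i j = pr i' j' ↔ i = i' ∧ j = j' := by
  simp [pr, Prod.ext_iff]

instance : Monoid (Br Q) where
  one_mul := one_mul'
  mul_one := mul_one'
  mul_assoc a b c := by
    show Br.mul (Br.mul a b) c = Br.mul a (Br.mul b c)
    rcases a with _ | (_ | ⟨i, j⟩) <;> rcases b with _ | (_ | ⟨k, l⟩) <;>
      rcases c with _ | (_ | ⟨m, n⟩) <;>
      simp only [Br.mul] <;> split_ifs <;> simp_all [Br.mul]

lemma mul_eq_one {x y : Br Q} (h : x * y = 1) : x = 1 ∧ y = 1 := by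
  change Br.mul x y = none at h
  rcases x with _ | (_ | ⟨i, j⟩) <;> rcases y with _ | (_ | ⟨k, l⟩) <;>
    simp_all [Br.mul, one_def] <;> split at h <;> simp_all

lemma sum_br {S : Type} [AddCommMonoid S] [Fintype Q] (F : Br Q → S) :
    ∑ m : Br Q, F m = F 1 + F z + ∑ p : Q × Q, F (pr p.1 p.2) := by
  rw [Fintype.sum_option, Fintype.sum_option, ← add_assoc]
  rfl

end Br

variable {A S : Type} [Semiring S]

section Run
variable {Q : Type} [Fintype Q]

/-- Forward state-vector evolution of a weighted automaton. -/
def run (d : Q → A → Q → S) : (Q → S) → List A → Q → S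
  | ι, [], j => ι j
  | ι, a :: w, j => run d (fun t => ∑ s, ι s * d s a t) w j

@[simp] lemma run_nil (d : Q → A → Q → S) (ι : Q → S) (j : Q) : run d ι [] j = ι j := rfl
@[simp] lemma run_cons (d : Q → A → Q → S) (ι : Q → S) (a : A) (w : List A) (j : Q) :
    run d ι (a :: w) j = run d (fun t => ∑ s, ι s * d s a t) w j := rfl

end Run

lemma sum_paths {k : ℕ} (d : Fin k → A → Fin k → S) (o : Fin k → S) (w : List A)
    (ι : Fin k → S) :
    ∑ q : Fin (w.length + 1) → Fin k,
      ι (q 0) * (List.ofFn fun j : Fin w.length =>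
        d (q j.castSucc) (w.get j) (q j.succ)).prod * o (q (Fin.last w.length))
    = ∑ j, run d ι w j * o j := by
  induction w generalizing ι with
  | nil =>
      simp only [List.length_nil]
      rw [← Equiv.sum_comp (Equiv.funUnique (Fin 1) (Fin k)).symm]
      simp [Equiv.funUnique]
  | cons a w ih =>
      simp only [List.length_cons]
      rw [← Equiv.sum_comp (Fin.consEquiv (fun _ : Fin (w.length + 1 + 1) => Fin k)),
        Fintype.sum_prod_type]
      simp only [Fin.consEquiv_apply]
      have key : ∀ (p : Fin k) (q' : Fin (w.length + 1) → Fin k),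
          (Fin.cons p q' : Fin (w.length + 1 + 1) → Fin k) 0 = p ∧
          (List.ofFn fun j : Fin (w.length + 1) =>
            d ((Fin.cons p q' : Fin (w.length + 1 + 1) → Fin k) j.castSucc) ((a :: w).get j)
              ((Fin.cons p q' : Fin (w.length + 1 + 1) → Fin k) j.succ)).prod
            = d p a (q' 0) * (List.ofFn fun j : Fin w.length =>
                d (q' j.castSucc) (w.get j) (q' j.succ)).prod ∧
          (Fin.cons p q' : Fin (w.length + 1 + 1) → Fin k) (Fin.last (w.length + 1)) = q' (Fin.last w.length) := by
        intro p q'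
        refine ⟨rfl, ?_, ?_⟩
        · rw [List.ofFn_succ]
          simp [← Fin.succ_castSucc]
        · rw [← Fin.succ_last, Fin.cons_succ]
      simp only [(fun p q' => (key p q').1), (fun p q' => (key p q').2.1),
        (fun p q' => (key p q').2.2)]
      rw [show ∑ j, run d ι (a :: w) j * o j
            = ∑ j, run d (fun t => ∑ s, ι s * d s a t) w j * o j from rfl, ← ih]
      rw [Finset.sum_comm]
      refine Finset.sum_congr rfl fun q' _ => ?_
      rw [Finset.sum_mul, Finset.sum_mul]
      refine Finset.sum_congr rfl fun p _ => ?_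
      rw [← mul_assoc]
instance {S M : Type} [Semiring S] : CoeFun (MonoidAlgebra S M) (fun _ => M → S) :=
  ⟨fun f => f.coeff⟩

section MA
variable {S : Type} [Semiring S] {M : Type} [Monoid M] [Fintype M] [DecidableEq M]

/-- Pointwise formula for multiplication in a monoid algebra over a finite monoid. -/
lemma mulApply (f g : MonoidAlgebra S M) (m : M) :
    (f * g) m = ∑ x : M × M, if x.1 * x.2 = m then f x.1 * g x.2 else 0 := by
  rw [MonoidAlgebra.mul_apply, Finsupp.sum_fintype _ _ (by intro i; simp [Finsupp.sum])]
  rw [Fintype.sum_prod_type]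
  refine Finset.sum_congr rfl fun x _ => ?_
  rw [Finsupp.sum_fintype _ _ (by intro i; simp)]

lemma oneApply (m : M) :
    (1 : MonoidAlgebra S M) m = if m = 1 then 1 else 0 := by
  rw [MonoidAlgebra.one_def, MonoidAlgebra.coeff_single, Finsupp.single_apply]
  simp [eq_comm]

/-- Functions into `S` as monoid-algebra elements. -/
noncomputable def toMA (f : M → S) : MonoidAlgebra S M := MonoidAlgebra.ofCoeff (Finsupp.equivFunOnFinite.symm f)

@[simp] lemma toMA_apply (f : M → S) (m : M) : toMA f m = f m := rfl

end MA
section Forward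
variable {A S : Type} [Semiring S] {Q : Type} [Fintype Q] [DecidableEq Q]

@[simp] lemma Br.z_ne_pr {Q : Type} (i j : Q) : (Br.z : Br Q) ≠ Br.pr i j := by simp [Br.z, Br.pr]
@[simp] lemma Br.one_ne_pr {Q : Type} (i j : Q) : (1 : Br Q) ≠ Br.pr i j := by simp [Br.one_def, Br.pr]
@[simp] lemma Br.one_ne_z {Q : Type} : (1 : Br Q) ≠ Br.z := by simp [Br.one_def, Br.z]

lemma Br.pr_mul_ne_one {Q : Type} [DecidableEq Q] (i j : Q) (x : Br Q) :
    Br.pr i j * x ≠ 1 := by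
  rcases x with _ | (_ | ⟨k, l⟩)
  · rw [show (none : Br Q) = 1 from rfl, Br.mul_one']; simp
  · rw [show (some none : Br Q) = Br.z from rfl, Br.mul_z]; exact fun h => Br.one_ne_z h.symm
  · rw [show (some (some (k, l)) : Br Q) = Br.pr k l from rfl, Br.pr_mul_pr]
    split_ifs <;> simp [eq_comm]

noncomputable def edge (d : Q → A → Q → S) (a : A) : MonoidAlgebra S (Br Q) :=
  toMA (fun m => match m with | some (some (i, j)) => d i a j | _ => 0)

@[simp] lemma edge_pr (d : Q → A → Q → S) (a : A) (i j : Q) :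
    edge d a (Br.pr i j) = d i a j := rfl
@[simp] lemma edge_one (d : Q → A → Q → S) (a : A) : edge d a 1 = 0 := rfl
@[simp] lemma edge_z (d : Q → A → Q → S) (a : A) : edge d a Br.z = 0 := rfl

noncomputable def Hma (d : Q → A → Q → S) (w : List A) : MonoidAlgebra S (Br Q) :=
  (w.map (edge d)).prod

lemma H_nil (d : Q → A → Q → S) : Hma d [] = 1 := rfl
lemma H_cons (d : Q → A → Q → S) (a : A) (w : List A) :
    Hma d (a :: w) = edge d a * Hma d w := by simp [Hma]
lemma H_append (d : Q → A → Q → S) (v w : List A) :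
    Hma d (v ++ w) = Hma d v * Hma d w := by simp [Hma]

lemma mul_apply_one (g f : MonoidAlgebra S (Br Q)) :
    (g * f) (1 : Br Q) = g 1 * f 1 := by
  rw [mulApply, Fintype.sum_prod_type, Br.sum_br]
  simp only [Br.z_mul, Br.pr_mul_ne_one, if_neg, Br.z_ne_one, one_mul]
  simp [Finset.sum_ite_eq']

lemma mul_apply_pair (g f : MonoidAlgebra S (Br Q)) (hg1 : g 1 = 0) (hgz : g Br.z = 0)
    (i j : Q) :
    (g * f) (Br.pr i j) = (∑ t, g (Br.pr i t) * f (Br.pr t j)) + g (Br.pr i j) * f 1 := by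
  rw [mulApply, Fintype.sum_prod_type, Br.sum_br]
  rw [show (∑ x2 : Br Q, if (1 : Br Q) * x2 = Br.pr i j then g 1 * f x2 else 0) = 0 by
    simp [hg1]]
  rw [show (∑ x2 : Br Q, if Br.z * x2 = Br.pr i j then g Br.z * f x2 else 0) = 0 by
    simp [hgz]]
  rw [zero_add, zero_add]
  have inner : ∀ p : Q × Q,
      (∑ x2 : Br Q, if Br.pr p.1 p.2 * x2 = Br.pr i j then g (Br.pr p.1 p.2) * f x2 else 0)
      = (if p.1 = i then g (Br.pr i p.2) * f (Br.pr p.2 j) else 0)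
        + (if p = (i, j) then g (Br.pr i j) * f 1 else 0) := by
    intro p
    rw [Br.sum_br]
    have e1 : (if Br.pr p.1 p.2 * (1 : Br Q) = Br.pr i j then g (Br.pr p.1 p.2) * f 1 else 0)
        = (if p = (i, j) then g (Br.pr i j) * f 1 else 0) := by
      rw [mul_one]
      by_cases h : p = (i, j)
      · subst h; simp
      · rw [if_neg, if_neg h]
        simp only [Br.pr_inj, not_and]
        intro h1 h2; exact h (Prod.ext h1 h2)
    have e2 : (if Br.pr p.1 p.2 * Br.z = Br.pr i j then g (Br.pr p.1 p.2) * f Br.z else 0)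
        = 0 := by
      rw [Br.mul_z, if_neg (Br.z_ne_pr i j)]
    have e3 : (∑ q : Q × Q, if Br.pr p.1 p.2 * Br.pr q.1 q.2 = Br.pr i j
          then g (Br.pr p.1 p.2) * f (Br.pr q.1 q.2) else 0)
        = (if p.1 = i then g (Br.pr i p.2) * f (Br.pr p.2 j) else 0) := by
      have cond : ∀ q : Q × Q,
          (Br.pr p.1 p.2 * Br.pr q.1 q.2 = Br.pr i j) ↔ (p.1 = i ∧ q = (p.2, j)) := by
        intro q
        rw [Br.pr_mul_pr]
        split_ifs with h
        · simp only [Br.pr_inj, Prod.ext_iff]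
          constructor
          · rintro ⟨h1, h2⟩; exact ⟨h1, h.symm, h2⟩
          · rintro ⟨h1, h2, h3⟩; exact ⟨h1, h3⟩
        · constructor
          · intro hz; exact absurd hz (Br.z_ne_pr i j)
          · rintro ⟨_, h2⟩
            exact absurd (congrArg Prod.fst h2).symm h
      simp only [cond]
      by_cases h : p.1 = i
      · subst h
        simp only [true_and]
        rw [Finset.sum_ite_eq' Finset.univ ((p.2, j) : Q × Q)
          (fun q => g (Br.pr p.1 p.2) * f (Br.pr q.1 q.2))]
        simp
      · simp [h]
    rw [e1, e2, e3, add_zero, add_comm]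
  rw [Finset.sum_congr rfl fun p _ => inner p, Finset.sum_add_distrib]
  rw [Finset.sum_ite_eq' Finset.univ ((i, j) : Q × Q) (fun _ => g (Br.pr i j) * f 1)]
  simp only [Finset.mem_univ, if_true]
  congr 1
  rw [Fintype.sum_prod_type]
  rw [Finset.sum_eq_single i (fun b _ hb => by simp [hb]) (by simp)]
  simp

lemma H_one_cons (d : Q → A → Q → S) (a : A) (w : List A) :
    Hma d (a :: w) 1 = 0 := by
  rw [H_cons, mul_apply_one, edge_one, zero_mul]

/-- linearity of `run` in the initial vector -/
lemma run_sum (d : Q → A → Q → S) (w : List A) :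
    ∀ (c : Q → S) (μ : Q → Q → S) (j : Q),
      run d (fun t' => ∑ t, c t * μ t t') w j = ∑ t, c t * run d (μ t) w j := by
  induction w with
  | nil => intro c μ j; rfl
  | cons a w ih =>
      intro c μ j
      rw [run_cons]
      rw [show (fun u => ∑ s, (∑ t, c t * μ t s) * d s a u)
          = (fun u => ∑ t, c t * ∑ s, μ t s * d s a u) by
        funext u
        simp only [Finset.sum_mul, Finset.mul_sum, mul_assoc]
        exact Finset.sum_comm]
      exact ih c (fun t u => ∑ s, μ t s * d s a u) j

lemma Hpair (d : Q → A → Q → S) (w : List A) :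
    ∀ (a : A) (i j : Q), Hma d (a :: w) (Br.pr i j) = run d (fun t => d i a t) w j := by
  induction w with
  | nil =>
      intro a i j
      rw [H_cons, H_nil, mul_one]
      rfl
  | cons b w ih =>
      intro a i j
      rw [H_cons, mul_apply_pair _ _ (edge_one d a) (edge_z d a)]
      rw [H_one_cons, mul_zero, add_zero]
      simp only [edge_pr, ih]
      rw [run_cons, ← run_sum]

lemma run_lift {Qf : Type} [Fintype Qf] (d : Qf → A → Qf → S)
    (d' : Option Qf → A → Option Qf → S)
    (hd1 : ∀ x a, d' x a none = 0) (hd2 : ∀ s a t, d' (some s) a (some t) = d s a t)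
    (w : List A) :
    ∀ (ν : Option Qf → S) (μ : Qf → S), ν none = 0 → (∀ t, ν (some t) = μ t) →
      (run d' ν w none = 0 ∧ ∀ j, run d' ν w (some j) = run d μ w j) := by
  induction w with
  | nil => intro ν μ h0 hs; exact ⟨h0, hs⟩
  | cons a w ih =>
      intro ν μ h0 hs
      have step := ih (fun t => ∑ s, ν s * d' s a t) (fun t => ∑ s, μ s * d s a t)
        (by simp [hd1]) (fun t => by
          show (∑ s : Option Qf, ν s * d' s a (some t)) = ∑ s : Qf, μ s * d s a t
          rw [Fintype.sum_option, h0, zero_mul, zero_add]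
          exact Finset.sum_congr rfl fun s _ => by rw [hs, hd2])
      exact ⟨step.1, fun j => step.2 j⟩

end Forward
section Conv
variable {S : Type} [Semiring S] {M : Type} [Monoid M] [Fintype M] [DecidableEq M]

/-- Convolution product on `M → S`. -/
def convF (f g : M → S) : M → S :=
  fun m => ∑ x : M × M, if x.1 * x.2 = m then f x.1 * g x.2 else 0

lemma toMA_conv (f g : M → S) : toMA (convF f g) = toMA f * toMA g := by
  apply MonoidAlgebra.coeff_injective; ext m
  rw [toMA_apply, mulApply]
  simp only [toMA_apply, convF]

lemma toMA_ind : toMA (fun m => if m = (1 : M) then 1 else 0) = (1 : MonoidAlgebra S M) := by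
  apply MonoidAlgebra.coeff_injective; ext m
  rw [toMA_apply, oneApply]

lemma convF_assoc (f g h : M → S) : convF (convF f g) h = convF f (convF g h) := by
  have key : toMA (convF (convF f g) h) = toMA (convF f (convF g h)) := by
    rw [toMA_conv, toMA_conv, toMA_conv, toMA_conv, mul_assoc]
  funext m
  have := congrArg (fun x => x m) key
  simpa only [toMA_apply] using this

lemma convF_one (f : M → S) : convF (fun m => if m = 1 then 1 else 0) f = f := by
  have key : toMA (convF (fun m => if m = (1:M) then 1 else 0) f) = toMA f := by
    rw [toMA_conv, toMA_ind, one_mul]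
  funext m
  have := congrArg (fun x => x m) key
  simpa only [toMA_apply] using this

end Conv
/-- Effectful recognition of an S-weighted language by a finite monoid:
    a map h : Σ* → (M → S) that is a monoid morphism into S^M with the
    convolution product and unit δ_e, together with an output map p : M → S
    such that L(w) = ∑_m h(w)(m)·p(m). -/
structure WeightedMonoidRecognizer (A S : Type) [Semiring S] (L : List A → S) where
  M : Type
  [fin : Fintype M]
  [dec : DecidableEq M]
  [mon : Monoid M]
  h : List A → M → S
  p : M → S
  h_unit : ∀ m, h [] m = if m = 1 then 1 else 0
  h_mul : ∀ v w m, h (v ++ w) m =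
    ∑ x : M × M, if x.1 * x.2 = m then h v x.1 * h w x.2 else 0
  recog : ∀ w, L w = ∑ m, h w m * p m

/-- An S-weighted language is computed by a weighted finite automaton over the
    semiring S iff it is effectfully recognized by a finite monoid. -/
theorem wfa_iff_weightedMonoidRecognizer {A S : Type} [Semiring S] (L : List A → S) :
    (∃ (k : ℕ) (i : Fin k → S) (δ : Fin k → A → Fin k → S) (o : Fin k → S),
      ∀ w : List A, L w =
        ∑ q : Fin (w.length + 1) → Fin k,
          i (q 0) *
            (List.ofFn fun j : Fin w.length =>
              δ (q j.castSucc) (w.get j) (q j.succ)).prod *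
            o (q (Fin.last w.length)))
    ↔ Nonempty (WeightedMonoidRecognizer A S L) := by
  constructor
  · rintro ⟨k, ι, d, o, hL⟩
    have hL' : ∀ w, L w = ∑ j, run d ι w j * o j := fun w => by
      rw [hL w, sum_paths]
    let d' : Option (Fin k) → A → Option (Fin k) → S := fun x a y =>
      match x, y with
      | _, none => 0
      | none, some t => ∑ s, ι s * d s a t
      | some s, some t => d s a t
    let p : Br (Option (Fin k)) → S := fun m =>
      match m with
      | none => ∑ s, ι s * o s
      | some none => 0
      | some (some (none, some j)) => o j
      | some (some (_, _)) => 0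
    refine ⟨⟨Br (Option (Fin k)), fun w m => Hma d' w m, p, ?_, ?_, ?_⟩⟩
    · intro m
      show Hma d' [] m = if m = 1 then 1 else 0
      rw [show Hma d' [] = 1 from H_nil d', oneApply]
    · intro v w m
      show Hma d' (v ++ w) m = ∑ x : Br (Option (Fin k)) × Br (Option (Fin k)),
        if x.1 * x.2 = m then Hma d' v x.1 * Hma d' w x.2 else 0
      rw [H_append, mulApply]
    · intro w
      show L w = ∑ m, Hma d' w m * p m
      rw [hL' w]
      cases w with
      | nil =>
          rw [show Hma d' [] = 1 from H_nil d']
          simp only [oneApply, ite_mul, one_mul, zero_mul]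
          rw [Finset.sum_ite_eq' Finset.univ (1 : Br (Option (Fin k))) p]
          simp only [Finset.mem_univ, if_true]
          show (∑ j, ι j * o j) = p 1
          rfl
      | cons a v =>
          rw [Br.sum_br (fun m => Hma d' (a :: v) m * p m)]
          rw [H_one_cons, zero_mul, show p Br.z = 0 from rfl, mul_zero, add_zero, zero_add]
          rw [Fintype.sum_prod_type, Fintype.sum_option]
          rw [show (∑ x : Fin k, ∑ y : Option (Fin k),
              Hma d' (a :: v) (Br.pr (some x) y) * p (Br.pr (some x) y)) = 0 by
            refine Finset.sum_eq_zero fun x _ => Finset.sum_eq_zero fun y _ => ?_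
            rw [show p (Br.pr (some x) y) = 0 by rcases y with _ | j <;> rfl, mul_zero]]
          rw [add_zero, Fintype.sum_option]
          rw [show p (Br.pr none none) = 0 from rfl, mul_zero, zero_add]
          have lift := run_lift (S := S) d d' (fun x a => by cases x <;> rfl) (fun s a t => rfl) v
            (fun y => d' none a y) (fun t => ∑ s, ι s * d s a t) rfl (fun t => rfl)
          refine Finset.sum_congr rfl fun j _ => ?_
          show run d (fun t => ∑ s, ι s * d s a t) v j * o j
            = Hma d' (a :: v) (Br.pr none (some j)) * p (Br.pr none (some j))
          rw [Hpair d' v a none (some j), lift.2 j]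
          rfl
  · rintro ⟨R⟩
    letI := R.fin; letI := R.dec; letI := R.mon
    set k := Fintype.card R.M with hk
    set E := (Fintype.equivFin R.M).symm with hE
    set dd : Fin k → A → Fin k → S :=
      fun q a q' => ∑ x : R.M, if E q * x = E q' then R.h [a] x else 0 with hdd
    have C : ∀ (w : List A) (g : R.M → S) (j : Fin k),
        run dd (fun q => g (E q)) w j = convF g (R.h w) (E j) := by
      intro w
      induction w with
      | nil =>
          intro g j
          rw [run_nil, convF, Fintype.sum_prod_type]
          have inner : ∀ x1 : R.M,
              (∑ x2 : R.M, if x1 * x2 = E j then g x1 * R.h [] x2 else 0)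
              = if x1 = E j then g x1 else 0 := by
            intro x1
            rw [Finset.sum_eq_single (1 : R.M)]
            · simp [R.h_unit]
            · intro b _ hb; simp [R.h_unit, hb]
            · simp
          rw [Finset.sum_congr rfl fun x1 _ => inner x1]
          rw [Finset.sum_ite_eq' Finset.univ (E j) g]
          simp
      | cons a v ih =>
          intro g j
          have hnext : (fun t => ∑ s, g (E s) * dd s a t)
              = fun q => (convF g (R.h [a])) (E q) := by
            funext t
            show (∑ s, g (E s) * dd s a t) = convF g (R.h [a]) (E t)
            rw [convF, Fintype.sum_prod_type,
              ← Equiv.sum_comp E (fun m => ∑ x, if m * x = E t then g m * R.h [a] x else 0)]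
            refine Finset.sum_congr rfl fun s _ => ?_
            rw [Finset.mul_sum]
            exact Finset.sum_congr rfl fun x _ => by rw [mul_ite, mul_zero]
          calc run dd (fun q => g (E q)) (a :: v) j
              = run dd (fun q => (convF g (R.h [a])) (E q)) v j := by
                rw [run_cons]
                exact congrArg (fun ν => run dd ν v j) hnext
            _ = convF (convF g (R.h [a])) (R.h v) (E j) := ih _ j
            _ = convF g (convF (R.h [a]) (R.h v)) (E j) := by rw [convF_assoc]
            _ = convF g (R.h (a :: v)) (E j) := by
                have hh : R.h (a :: v) = convF (R.h [a]) (R.h v) := by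
                  funext m; exact R.h_mul [a] v m
                rw [hh]
    refine ⟨k, fun q => if E q = 1 then 1 else 0, dd, fun q => R.p (E q), fun w => ?_⟩
    have hsp := sum_paths dd (fun q => R.p (E q)) w (fun q => if E q = 1 then 1 else 0)
    refine Eq.trans ?_ hsp.symm
    rw [R.recog w, ← Equiv.sum_comp E (fun m => R.h w m * R.p m)]
    refine Finset.sum_congr rfl fun j _ => ?_
    have hC := C w (fun m => if m = 1 then 1 else 0) j
    rw [convF_one] at hC
    exact (congrArg (fun x => x * R.p (E j)) hC).symm
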